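/- Suppose that for the solution ({x_n},{y_n}) there exist constants M1, M2 > 0 such that M1·y_n ≤ x_n ≤ M2·y_n for all n ∈ ℕ. Suppose A = 0, α = 0, and I_β ∪ I_γ ⊆ I_B ∪ I_C. Then there exist M > 0 and N ∈ ℕ such that x_n ≤ M and y_n ≤ M for all n > N. -/

import Mathlib

open Finset

/-- The index set of the coefficient function `f` on `{1, …, k}`:
the set of indices `i ∈ {1, …, k}` with `f i > 0`. -/
noncomputable def indexSet (k : ℕ) (f : ℕ → ℝ) : Finset ℕ :=
  (Finset.Icc 1 k).filter fun i => 0 < f i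

/-- The iteration condition: for every sequence `c` (indexed by `1, 2, …`)
taking values in `S`, there exist positive integers `N1 ≤ N2 ≤ η` such that
`∑_{m=N1}^{N2} c m ∈ T`. -/
def iterCond (η : ℕ) (S T : Finset ℕ) : Prop :=
  ∀ c : ℕ → ℕ, (∀ m, 1 ≤ m → c m ∈ S) →
    ∃ N1 N2 : ℕ, 0 < N1 ∧ N1 ≤ N2 ∧ N2 ≤ η ∧ (∑ m ∈ Finset.Icc N1 N2, c m) ∈ T

theorem stmt_5
    (k : ℕ) (hk : 0 < k)
    (α A p q : ℝ) (β γ B C δ ε D E : ℕ → ℝ)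
    (hα : 0 ≤ α) (hA : 0 ≤ A) (hp : 0 ≤ p) (hq : 0 ≤ q)
    (hβ : ∀ i, 0 ≤ β i) (hγ : ∀ i, 0 ≤ γ i) (hB : ∀ j, 0 ≤ B j) (hC : ∀ j, 0 ≤ C j)
    (hδ : ∀ i, 0 ≤ δ i) (hε : ∀ i, 0 ≤ ε i) (hD : ∀ j, 0 ≤ D j) (hE : ∀ j, 0 ≤ E j)
    (x y : ℕ → ℝ)
    (hxnn : ∀ n, 0 ≤ x n) (hynn : ∀ n, 0 ≤ y n)
    (hxden : ∀ n, k ≤ n →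
      0 < A + ∑ j ∈ Icc 1 k, B j * x (n - j) + ∑ j ∈ Icc 1 k, C j * y (n - j))
    (hyden : ∀ n, k ≤ n →
      0 < q + ∑ j ∈ Icc 1 k, D j * x (n - j) + ∑ j ∈ Icc 1 k, E j * y (n - j))
    (hxrec : ∀ n, k ≤ n → x n =
      (α + ∑ i ∈ Icc 1 k, β i * x (n - i) + ∑ i ∈ Icc 1 k, γ i * y (n - i)) /
      (A + ∑ j ∈ Icc 1 k, B j * x (n - j) + ∑ j ∈ Icc 1 k, C j * y (n - j)))
    (hyrec : ∀ n, k ≤ n → y n =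
      (p + ∑ i ∈ Icc 1 k, δ i * x (n - i) + ∑ i ∈ Icc 1 k, ε i * y (n - i)) /
      (q + ∑ j ∈ Icc 1 k, D j * x (n - j) + ∑ j ∈ Icc 1 k, E j * y (n - j)))
    (M1 M2 : ℝ) (hM1 : 0 < M1) (hM2 : 0 < M2)
    (hcmp : ∀ n, M1 * y n ≤ x n ∧ x n ≤ M2 * y n)
    (hA0 : A = 0) (hα0 : α = 0)
    (hsub : indexSet k β ∪ indexSet k γ ⊆ indexSet k B ∪ indexSet k C) :
    ∃ M : ℝ, 0 < M ∧ ∃ N : ℕ, ∀ n, N < n → x n ≤ M ∧ y n ≤ M := by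
  classical
  have h1mem : 1 ∈ Icc 1 k := Finset.mem_Icc.mpr ⟨le_refl 1, hk⟩
  have hne : (Icc 1 k).Nonempty := ⟨1, h1mem⟩
  obtain ⟨K, hK1, hcoef⟩ :
      ∃ K : ℝ, 1 ≤ K ∧ ∀ i ∈ Icc 1 k, β i + γ i / M1 ≤ K * (B i + C i / M2) := by
    refine ⟨1 + (Icc 1 k).sup' hne (fun i => (β i + γ i / M1) / (B i + C i / M2)), ?_, ?_⟩
    · have h0 : (0:ℝ) ≤ (β 1 + γ 1 / M1) / (B 1 + C 1 / M2) :=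
        div_nonneg (add_nonneg (hβ 1) (div_nonneg (hγ 1) hM1.le))
          (add_nonneg (hB 1) (div_nonneg (hC 1) hM2.le))
      have hs : (β 1 + γ 1 / M1) / (B 1 + C 1 / M2) ≤
          (Icc 1 k).sup' hne (fun i => (β i + γ i / M1) / (B i + C i / M2)) :=
        Finset.le_sup' (fun i => (β i + γ i / M1) / (B i + C i / M2)) h1mem
      linarith
    · intro i hi
      rcases eq_or_lt_of_le (add_nonneg (hB i) (div_nonneg (hC i) hM2.le)) with hd | hd
      · have hBi : B i = 0 := by
          nlinarith [hB i, div_nonneg (hC i) hM2.le]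
        have hCi : C i = 0 := by
          have h5 : C i / M2 = 0 := by nlinarith [hB i, div_nonneg (hC i) hM2.le]
          field_simp at h5; simpa using h5
        have hiBC : i ∉ indexSet k B ∪ indexSet k C := by
          simp [indexSet, hBi, hCi]
        have hiβγ : i ∉ indexSet k β ∪ indexSet k γ := fun h => hiBC (hsub h)
        have hβi : β i = 0 := by
          by_contra h
          exact hiβγ (Finset.mem_union_left _
            (Finset.mem_filter.mpr ⟨hi, lt_of_le_of_ne (hβ i) (Ne.symm h)⟩))
        have hγi : γ i = 0 := by
          by_contra h
          exact hiβγ (Finset.mem_union_right _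
            (Finset.mem_filter.mpr ⟨hi, lt_of_le_of_ne (hγ i) (Ne.symm h)⟩))
        simp [hβi, hγi, ← hd]
      · have hs : (β i + γ i / M1) / (B i + C i / M2) ≤
            (Icc 1 k).sup' hne (fun i => (β i + γ i / M1) / (B i + C i / M2)) :=
          Finset.le_sup' (fun i => (β i + γ i / M1) / (B i + C i / M2)) hi
        have heq : β i + γ i / M1 = ((β i + γ i / M1) / (B i + C i / M2)) * (B i + C i / M2) :=
          (div_mul_cancel₀ _ hd.ne').symm
        rw [heq]
        apply mul_le_mul_of_nonneg_right _ hd.le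
        linarith
  have hK0 : (0:ℝ) < K := by linarith
  have hxK : ∀ n, k ≤ n → x n ≤ K := by
    intro n hn
    have hden := hxden n hn
    rw [hxrec n hn, div_le_iff₀ hden]
    have hterm : ∀ i ∈ Icc 1 k,
        β i * x (n - i) + γ i * y (n - i) ≤ K * (B i * x (n - i) + C i * y (n - i)) := by
      intro i hi
      have hu : 0 ≤ x (n - i) := hxnn _
      have hv : 0 ≤ y (n - i) := hynn _
      have h1 : M1 * y (n - i) ≤ x (n - i) := (hcmp _).1
      have h2 : x (n - i) ≤ M2 * y (n - i) := (hcmp _).2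
      have hyx : y (n - i) ≤ x (n - i) / M1 := by
        rw [le_div_iff₀ hM1]; linarith
      have hxy : x (n - i) / M2 ≤ y (n - i) := by
        rw [div_le_iff₀ hM2]; linarith
      have step1 : β i * x (n - i) + γ i * y (n - i) ≤ (β i + γ i / M1) * x (n - i) := by
        have h6 : γ i * y (n - i) ≤ γ i * (x (n - i) / M1) :=
          mul_le_mul_of_nonneg_left hyx (hγ i)
        have h3 : γ i * (x (n - i) / M1) = (γ i / M1) * x (n - i) := by ring
        have h7 : (β i + γ i / M1) * x (n - i) = β i * x (n - i) + (γ i / M1) * x (n - i) := by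
          ring
        linarith
      have step2 : (β i + γ i / M1) * x (n - i) ≤ K * (B i + C i / M2) * x (n - i) :=
        mul_le_mul_of_nonneg_right (hcoef i hi) hu
      have step3 : K * (B i + C i / M2) * x (n - i) ≤
          K * (B i * x (n - i) + C i * y (n - i)) := by
        have h8 : C i / M2 * x (n - i) ≤ C i * y (n - i) := by
          have h9 := mul_le_mul_of_nonneg_left hxy (hC i)
          have h10 : C i * (x (n - i) / M2) = C i / M2 * x (n - i) := by ring
          linarith
        have h11 := mul_le_mul_of_nonneg_left h8 hK0.le
        have e1 : K * (B i + C i / M2) * x (n - i) =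
            K * (B i * x (n - i)) + K * (C i / M2 * x (n - i)) := by ring
        have e2 : K * (B i * x (n - i) + C i * y (n - i)) =
            K * (B i * x (n - i)) + K * (C i * y (n - i)) := by ring
        linarith
      linarith
    have hsum : ∑ i ∈ Icc 1 k, (β i * x (n - i) + γ i * y (n - i)) ≤
        ∑ i ∈ Icc 1 k, K * (B i * x (n - i) + C i * y (n - i)) :=
      Finset.sum_le_sum hterm
    rw [Finset.sum_add_distrib] at hsum
    rw [← Finset.mul_sum, Finset.sum_add_distrib] at hsum
    rw [hα0, hA0]
    linarith
  refine ⟨K + K / M1, by positivity, k, fun n hn => ?_⟩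
  have hxn : x n ≤ K := hxK n hn.le
  have hyn : y n ≤ K / M1 := by
    rw [le_div_iff₀ hM1]
    have := (hcmp n).1
    linarith
  have hKM : (0:ℝ) ≤ K / M1 := by positivity
  exact ⟨by linarith, by linarith⟩
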